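/- For Re(s) > 0, a > 0, and every nonnegative integer n: sum_{k=0}^n binomial(n,k) * (-1)^k / (k+a)^s = (1/Γ(s)) * ∫_0^∞ t^{s-1} e^{-a t} (1 - e^{-t})^n dt. -/

import Mathlib

open MeasureTheory Set

lemma integrable_rpow_mul_exp_neg_mul {s r : ℝ} (hs : 0 < s) (hr : 0 < r) :
    IntegrableOn (fun t : ℝ => t ^ (s - 1) * Real.exp (-(r * t))) (Ioi 0) := by
  have h := Real.GammaIntegral_convergent hs
  rw [← mul_zero r, ← integrableOn_Ioi_comp_mul_left_iff _ _ hr] at h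
  refine MeasureTheory.IntegrableOn.congr_fun (h.const_mul ((1 / r) ^ (s - 1)))
    (fun t ht => ?_) measurableSet_Ioi
  have ht : 0 < t := ht
  rw [Real.mul_rpow hr.le ht.le, one_div, Real.inv_rpow hr.le]
  field_simp [(Real.rpow_pos_of_pos hr (s-1)).ne']

theorem binomial_sum_rpow_integral (s a : ℝ) (hs : 0 < s) (ha : 0 < a) (n : ℕ) :
    ∑ k ∈ Finset.range (n + 1), (n.choose k : ℝ) * (-1) ^ k / ((k : ℝ) + a) ^ s
      = (1 / Real.Gamma s) *
        ∫ t in Set.Ioi (0 : ℝ), t ^ (s - 1) * Real.exp (-a * t) * (1 - Real.exp (-t)) ^ n := by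
  have hΓ : Real.Gamma s ≠ 0 := (Real.Gamma_pos_of_pos hs).ne'
  have hka : ∀ k : ℕ, (0:ℝ) < (k : ℝ) + a := fun k => by positivity
  -- rewrite the integrand as a finite sum
  have key : ∀ t ∈ Ioi (0:ℝ), t ^ (s - 1) * Real.exp (-a * t) * (1 - Real.exp (-t)) ^ n
      = ∑ k ∈ Finset.range (n + 1),
          (n.choose k : ℝ) * (-1) ^ k * (t ^ (s - 1) * Real.exp (-(((k : ℝ) + a) * t))) := by
    intro t _
    rw [show (1 - Real.exp (-t)) = -Real.exp (-t) + 1 by ring, add_pow, Finset.mul_sum]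
    refine Finset.sum_congr rfl fun k hk => ?_
    have : Real.exp (-(((k : ℝ) + a) * t)) = Real.exp (-a * t) * Real.exp (-t) ^ k := by
      rw [← Real.exp_nat_mul, ← Real.exp_add]
      ring_nf
    rw [this]
    ring
  rw [setIntegral_congr_fun measurableSet_Ioi key]
  rw [integral_finset_sum _ (fun k _ => ((integrable_rpow_mul_exp_neg_mul hs (hka k)).const_mul _))]
  rw [Finset.mul_sum]
  refine Finset.sum_congr rfl fun k _ => ?_
  rw [integral_const_mul, Real.integral_rpow_mul_exp_neg_mul_Ioi hs (hka k)]
  rw [Real.div_rpow zero_le_one (hka k).le, Real.one_rpow]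
  field_simp
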